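/- Let X and Y be i.i.d. real random variables with finite fourth moment, and let Z = X − E[X] with E[Z²] > 0. Then E[|X − Y|] ≥ 2 (E[Z²]³ / (E[Z⁴] + 3 E[Z²]²))^{1/2}. -/

import Mathlib

open MeasureTheory ProbabilityTheory
open scoped ENNReal

private lemma aux_abs_pow_le (x : ℝ) {k : ℕ} (hk : k ≤ 4) : |x| ^ k ≤ 1 + x ^ 4 := by
  rcases le_or_gt (|x|) 1 with h | h
  · have h1 : |x| ^ k ≤ 1 := pow_le_one₀ (abs_nonneg x) h
    nlinarith [pow_nonneg (abs_nonneg x) 4, sq_nonneg (x ^ 2)]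
  · have h1 : |x| ^ k ≤ |x| ^ 4 := pow_le_pow_right₀ h.le hk
    have h2 : |x| ^ 4 = x ^ 4 := by rw [← abs_pow, abs_of_nonneg (by positivity)]
    nlinarith

private lemma aux_memℒp4 {Ω : Type*} [MeasurableSpace Ω] {P : Measure Ω} {f : Ω → ℝ}
    (hm : AEStronglyMeasurable f P) (h : Integrable (fun ω => f ω ^ 4) P) : MemLp f 4 P := by
  rw [← memLp_norm_rpow_iff (p := 4) (q := 4) hm (by norm_num) (by norm_num),
    show (4 : ℝ≥0∞) / 4 = 1 from ENNReal.div_self (by norm_num) (by norm_num),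
    memLp_one_iff_integrable]
  refine h.congr (Filter.Eventually.of_forall fun ω => ?_)
  show f ω ^ 4 = ‖f ω‖ ^ ((4 : ℝ≥0∞)).toReal
  rw [show ((4 : ℝ≥0∞)).toReal = ((4 : ℕ) : ℝ) from by simp, Real.rpow_natCast,
    Real.norm_eq_abs, ← abs_pow, abs_of_nonneg (by positivity)]

private lemma aux_int_pow4 {Ω : Type*} [MeasurableSpace Ω] {P : Measure Ω} {f : Ω → ℝ}
    (hf : MemLp f 4 P) : Integrable (fun ω => f ω ^ 4) P := by
  have h := hf.integrable_norm_rpow (by norm_num) (by norm_num)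
  refine h.congr (Filter.Eventually.of_forall fun ω => ?_)
  show ‖f ω‖ ^ ((4 : ℝ≥0∞)).toReal = f ω ^ 4
  rw [show ((4 : ℝ≥0∞)).toReal = ((4 : ℕ) : ℝ) from by simp, Real.rpow_natCast,
    Real.norm_eq_abs, ← abs_pow, abs_of_nonneg (by positivity)]

private lemma aux_int_pow {Ω : Type*} [MeasurableSpace Ω] {P : Measure Ω} [IsFiniteMeasure P]
    {f : Ω → ℝ} (hf : MemLp f 4 P) {k : ℕ} (hk : k ≤ 4) :
    Integrable (fun ω => f ω ^ k) P := by
  refine ((integrable_const (1 : ℝ)).add (aux_int_pow4 hf)).mono'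
    ((hf.aestronglyMeasurable.aemeasurable.pow_const k).aestronglyMeasurable)
    (Filter.Eventually.of_forall fun ω => ?_)
  rw [Real.norm_eq_abs, abs_pow]
  exact aux_abs_pow_le _ hk

private lemma aux_cs {Ω : Type*} [MeasurableSpace Ω] {P : Measure Ω} {f g : Ω → ℝ}
    (hf0 : ∀ ω, 0 ≤ f ω) (hg0 : ∀ ω, 0 ≤ g ω) (hf : MemLp f 2 P) (hg : MemLp g 2 P) :
    ∫ ω, f ω * g ω ∂P ≤ Real.sqrt (∫ ω, f ω ^ 2 ∂P) * Real.sqrt (∫ ω, g ω ^ 2 ∂P) := by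
  have h := integral_mul_le_Lp_mul_Lq_of_nonneg (μ := P) (p := 2) (q := 2)
    Real.HolderConjugate.two_two (Filter.Eventually.of_forall hf0) (Filter.Eventually.of_forall hg0)
    (by simpa using hf) (by simpa using hg)
  rw [Real.sqrt_eq_rpow, Real.sqrt_eq_rpow]
  have e : ∀ x : ℝ, x ^ (2 : ℝ) = x ^ 2 := fun x => by
    rw [show (2 : ℝ) = ((2 : ℕ) : ℝ) by norm_num, Real.rpow_natCast]
  simpa [e] using h

private lemma aux_final (a1 A3 z2 z4 : ℝ) (ha1 : 0 ≤ a1) (hA3 : 0 ≤ A3) (hz2 : 0 < z2)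
    (hz4 : 0 ≤ z4) (i1 : 2 * z2 ≤ Real.sqrt a1 * Real.sqrt A3)
    (i2 : A3 ≤ Real.sqrt (2 * z2) * Real.sqrt (2 * z4 + 6 * z2 ^ 2)) :
    2 * Real.sqrt (z2 ^ 3 / (z4 + 3 * z2 ^ 2)) ≤ a1 := by
  have s1 : (2 * z2) ^ 2 ≤ a1 * A3 := by
    nlinarith [i1, mul_self_le_mul_self (by positivity : (0:ℝ) ≤ 2 * z2) i1,
      Real.sq_sqrt ha1, Real.sq_sqrt hA3, Real.sqrt_nonneg a1, Real.sqrt_nonneg A3]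
  have s2 : A3 ^ 2 ≤ (2 * z2) * (2 * z4 + 6 * z2 ^ 2) := by
    nlinarith [i2, mul_self_le_mul_self hA3 i2,
      Real.sq_sqrt (by positivity : (0:ℝ) ≤ 2 * z2),
      Real.sq_sqrt (by nlinarith : (0:ℝ) ≤ 2 * z4 + 6 * z2 ^ 2),
      Real.sqrt_nonneg (2 * z2), Real.sqrt_nonneg (2 * z4 + 6 * z2 ^ 2)]
  have key : (2 * z2) ^ 3 ≤ a1 ^ 2 * (2 * z4 + 6 * z2 ^ 2) := by
    have t1 : (2 * z2) ^ 2 * (2 * z2) ^ 2 ≤ (a1 * A3) * (a1 * A3) :=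
      mul_le_mul s1 s1 (by positivity) (by nlinarith)
    have t2 : a1 ^ 2 * A3 ^ 2 ≤ a1 ^ 2 * ((2 * z2) * (2 * z4 + 6 * z2 ^ 2)) :=
      mul_le_mul_of_nonneg_left s2 (sq_nonneg a1)
    nlinarith [t1, t2, hz2]
  have hA4pos : (0:ℝ) < 2 * z4 + 6 * z2 ^ 2 := by nlinarith
  have hden : z4 + 3 * z2 ^ 2 ≠ 0 := by nlinarith
  calc 2 * Real.sqrt (z2 ^ 3 / (z4 + 3 * z2 ^ 2))
      = Real.sqrt ((2 * z2) ^ 3 / (2 * z4 + 6 * z2 ^ 2)) := by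
        rw [show (2 * z2) ^ 3 / (2 * z4 + 6 * z2 ^ 2) =
            (2:ℝ) ^ 2 * (z2 ^ 3 / (z4 + 3 * z2 ^ 2)) from by field_simp; ring,
          Real.sqrt_mul (by positivity) (z2 ^ 3 / (z4 + 3 * z2 ^ 2)),
          Real.sqrt_sq (by norm_num : (0:ℝ) ≤ 2)]
    _ ≤ a1 := by
        rw [show a1 = Real.sqrt (a1 ^ 2) from (Real.sqrt_sq ha1).symm]
        apply Real.sqrt_le_sqrt
        rw [div_le_iff₀ hA4pos]
        exact key

/-- Fourth-moment lower bound on the mean absolute difference of two i.i.d. random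
variables: with `Z = X - E[X]`, `E|X - Y| ≥ 2 (E[Z²]³ / (E[Z⁴] + 3E[Z²]²))^{1/2}`. -/
theorem stmt_14 {Ω : Type*} [MeasurableSpace Ω] (P : Measure Ω) [IsProbabilityMeasure P]
    (X Y : Ω → ℝ) (hX : Measurable X) (hY : Measurable Y)
    (hindep : IndepFun X Y P) (hid : Measure.map X P = Measure.map Y P)
    (hint : Integrable (fun ω => (X ω) ^ 4) P)
    (m z2 z4 : ℝ) (hm : m = ∫ ω, X ω ∂P)
    (hz2 : z2 = ∫ ω, (X ω - m) ^ 2 ∂P) (hz4 : z4 = ∫ ω, (X ω - m) ^ 4 ∂P)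
    (hz2pos : 0 < z2) :
    2 * Real.sqrt (z2 ^ 3 / (z4 + 3 * z2 ^ 2)) ≤ ∫ ω, |X ω - Y ω| ∂P := by
  have hDmeas : Measurable fun ω => X ω - Y ω := hX.sub hY
  have hX4 : MemLp X 4 P := aux_memℒp4 hX.aestronglyMeasurable hint
  have hY4 : MemLp Y 4 P := by
    have h1 : MemLp id 4 (Measure.map X P) :=
      (memLp_map_measure_iff aestronglyMeasurable_id hX.aemeasurable).mpr (by simpa using hX4)
    rw [hid] at h1
    simpa using (memLp_map_measure_iff aestronglyMeasurable_id hY.aemeasurable).mp h1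
  have hZx4 : MemLp (fun ω => X ω - m) 4 P := hX4.sub (memLp_const m)
  have hZy4 : MemLp (fun ω => Y ω - m) 4 P := hY4.sub (memLp_const m)
  have hD4 : MemLp (fun ω => X ω - Y ω) 4 P := hX4.sub hY4
  -- moment transfer from Y to X
  have hmap : ∀ g : ℝ → ℝ, Measurable g → ∫ ω, g (Y ω) ∂P = ∫ ω, g (X ω) ∂P := by
    intro g hg
    rw [← integral_map hY.aemeasurable hg.aestronglyMeasurable, ← hid,
      integral_map hX.aemeasurable hg.aestronglyMeasurable]
  have hmom : ∀ k : ℕ, ∫ ω, (Y ω - m) ^ k ∂P = ∫ ω, (X ω - m) ^ k ∂P := fun k =>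
    hmap (fun x => (x - m) ^ k) ((measurable_id.sub_const m).pow_const k)
  -- independence of centered powers
  have hindZ : ∀ i j : ℕ, IndepFun (fun ω => (X ω - m) ^ i) (fun ω => (Y ω - m) ^ j) P :=
    fun i j => hindep.comp ((measurable_id.sub_const m).pow_const i)
      ((measurable_id.sub_const m).pow_const j)
  -- integrabilities
  have hIZx : ∀ k : ℕ, k ≤ 4 → Integrable (fun ω => (X ω - m) ^ k) P :=
    fun k hk => aux_int_pow hZx4 hk
  have hIZy : ∀ k : ℕ, k ≤ 4 → Integrable (fun ω => (Y ω - m) ^ k) P :=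
    fun k hk => aux_int_pow hZy4 hk
  have hIprod : ∀ i j : ℕ, i ≤ 4 → j ≤ 4 →
      Integrable (fun ω => (X ω - m) ^ i * (Y ω - m) ^ j) P :=
    fun i j hi hj => (hindZ i j).integrable_mul (hIZx i hi) (hIZy j hj)
  -- first moments
  have hIX1 : Integrable X P := memLp_one_iff_integrable.mp
    (hX4.mono_exponent (by norm_num))
  have hEZx1 : ∫ ω, (X ω - m) ∂P = 0 := by
    rw [integral_sub hIX1 (integrable_const m)]
    simp [hm]
  have hEZy1 : ∫ ω, (Y ω - m) ∂P = 0 :=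
    (hmap (fun x => x - m) (measurable_id.sub_const m)).trans hEZx1
  have hEZy2 : ∫ ω, (Y ω - m) ^ 2 ∂P = z2 := (hmom 2).trans hz2.symm
  have hEZy4 : ∫ ω, (Y ω - m) ^ 4 ∂P = z4 := (hmom 4).trans hz4.symm
  -- product expectations
  have hcross : ∀ i j : ℕ, ∫ ω, (X ω - m) ^ i * (Y ω - m) ^ j ∂P =
      (∫ ω, (X ω - m) ^ i ∂P) * (∫ ω, (Y ω - m) ^ j ∂P) := fun i j => by
    have := (hindZ i j).integral_mul_eq_mul_integral
      ((hX.sub measurable_const).pow_const i).aestronglyMeasurable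
      ((hY.sub measurable_const).pow_const j).aestronglyMeasurable
    simpa [Pi.mul_apply] using this
  have hc11 : ∫ ω, (X ω - m) * (Y ω - m) ∂P = 0 := by
    have h := hcross 1 1
    simp only [pow_one] at h
    rw [h, hEZx1, zero_mul]
  have hc31 : ∫ ω, (X ω - m) ^ 3 * (Y ω - m) ∂P = 0 := by
    have h := hcross 3 1
    simp only [pow_one] at h
    rw [h, hEZy1, mul_zero]
  have hc13 : ∫ ω, (X ω - m) * (Y ω - m) ^ 3 ∂P = 0 := by
    have h := hcross 1 3
    simp only [pow_one] at h
    rw [h, hEZx1, zero_mul]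
  have hc22 : ∫ ω, (X ω - m) ^ 2 * (Y ω - m) ^ 2 ∂P = z2 * z2 := by
    rw [hcross 2 2, ← hz2, hEZy2]
  have hP11 : Integrable (fun ω => (X ω - m) * (Y ω - m)) P := by
    simpa using hIprod 1 1 (by norm_num) (by norm_num)
  have hP31 : Integrable (fun ω => (X ω - m) ^ 3 * (Y ω - m)) P := by
    simpa using hIprod 3 1 (by norm_num) (by norm_num)
  have hP13 : Integrable (fun ω => (X ω - m) * (Y ω - m) ^ 3) P := by
    simpa using hIprod 1 3 (by norm_num) (by norm_num)
  have hP22 : Integrable (fun ω => (X ω - m) ^ 2 * (Y ω - m) ^ 2) P :=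
    hIprod 2 2 (by norm_num) (by norm_num)
  -- second moment of the difference
  have hE2 : ∫ ω, (X ω - Y ω) ^ 2 ∂P = 2 * z2 := by
    have e : ∀ ω, (X ω - Y ω) ^ 2 =
        ((X ω - m) ^ 2 + (Y ω - m) ^ 2) - 2 * ((X ω - m) * (Y ω - m)) := fun ω => by ring
    have I1 : Integrable (fun ω => (X ω - m) ^ 2 + (Y ω - m) ^ 2) P :=
      (hIZx 2 (by norm_num)).add (hIZy 2 (by norm_num))
    have I2 : Integrable (fun ω => 2 * ((X ω - m) * (Y ω - m))) P := hP11.const_mul 2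
    calc ∫ ω, (X ω - Y ω) ^ 2 ∂P
        = ∫ ω, (((X ω - m) ^ 2 + (Y ω - m) ^ 2) - 2 * ((X ω - m) * (Y ω - m))) ∂P :=
          integral_congr_ae (Filter.Eventually.of_forall e)
      _ = 2 * z2 := by
          rw [integral_sub I1 I2,
            integral_add (hIZx 2 (by norm_num)) (hIZy 2 (by norm_num)),
            integral_const_mul, hc11, ← hz2, hEZy2]
          ring
  -- fourth moment of the difference
  have hE4 : ∫ ω, (X ω - Y ω) ^ 4 ∂P = 2 * z4 + 6 * z2 ^ 2 := by
    have e : ∀ ω, (X ω - Y ω) ^ 4 =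
        (((X ω - m) ^ 4 + (Y ω - m) ^ 4) + 6 * ((X ω - m) ^ 2 * (Y ω - m) ^ 2)) -
          (4 * ((X ω - m) ^ 3 * (Y ω - m)) + 4 * ((X ω - m) * (Y ω - m) ^ 3)) := fun ω => by ring
    have I1 : Integrable (fun ω => (X ω - m) ^ 4 + (Y ω - m) ^ 4) P :=
      (hIZx 4 (by norm_num)).add (hIZy 4 (by norm_num))
    have I2 : Integrable (fun ω => ((X ω - m) ^ 4 + (Y ω - m) ^ 4) +
        6 * ((X ω - m) ^ 2 * (Y ω - m) ^ 2)) P := I1.add (hP22.const_mul 6)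
    have I3 : Integrable (fun ω => 4 * ((X ω - m) ^ 3 * (Y ω - m))) P := hP31.const_mul 4
    have I4 : Integrable (fun ω => 4 * ((X ω - m) * (Y ω - m) ^ 3)) P := hP13.const_mul 4
    have I34 : Integrable (fun ω => 4 * ((X ω - m) ^ 3 * (Y ω - m)) +
        4 * ((X ω - m) * (Y ω - m) ^ 3)) P := I3.add I4
    calc ∫ ω, (X ω - Y ω) ^ 4 ∂P
        = ∫ ω, ((((X ω - m) ^ 4 + (Y ω - m) ^ 4) + 6 * ((X ω - m) ^ 2 * (Y ω - m) ^ 2)) -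
            (4 * ((X ω - m) ^ 3 * (Y ω - m)) + 4 * ((X ω - m) * (Y ω - m) ^ 3))) ∂P :=
          integral_congr_ae (Filter.Eventually.of_forall e)
      _ = 2 * z4 + 6 * z2 ^ 2 := by
          rw [integral_sub I2 I34, integral_add I1 (hP22.const_mul 6),
            integral_add (hIZx 4 (by norm_num)) (hIZy 4 (by norm_num)),
            integral_add I3 I4,
            integral_const_mul, integral_const_mul, integral_const_mul,
            hc31, hc13, hc22, ← hz4, hEZy4]
          ring
  -- integrabilities for Cauchy-Schwarz
  have hIabsD : Integrable (fun ω => |X ω - Y ω|) P :=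
    (memLp_one_iff_integrable.mp (hD4.mono_exponent (by norm_num))).abs
  have hID2 : Integrable (fun ω => (X ω - Y ω) ^ 2) P :=
    (hD4.mono_exponent (by norm_num)).integrable_sq
  have hID4 : Integrable (fun ω => (X ω - Y ω) ^ 4) P := aux_int_pow4 hD4
  have hIabsD3 : Integrable (fun ω => |X ω - Y ω| ^ 3) P := by
    refine ((integrable_const (1 : ℝ)).add hID4).mono'
      ((hDmeas.abs.pow_const 3).aestronglyMeasurable)
      (Filter.Eventually.of_forall fun ω => ?_)
    rw [Real.norm_eq_abs, abs_pow, abs_abs]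
    exact aux_abs_pow_le _ (by norm_num)
  have ha1 : 0 ≤ ∫ ω, |X ω - Y ω| ∂P := integral_nonneg fun ω => abs_nonneg _
  have hA3nn : 0 ≤ ∫ ω, |X ω - Y ω| ^ 3 ∂P := integral_nonneg fun ω => by positivity
  have hz4nn : 0 ≤ z4 := hz4 ▸ integral_nonneg fun ω => by positivity
  -- Cauchy-Schwarz I : E[D^2] ≤ sqrt(E|D|) sqrt(E|D|^3)
  have ineq1 : 2 * z2 ≤
      Real.sqrt (∫ ω, |X ω - Y ω| ∂P) * Real.sqrt (∫ ω, |X ω - Y ω| ^ 3 ∂P) := by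
    have hsm : Measurable fun ω => Real.sqrt |X ω - Y ω| :=
      Real.continuous_sqrt.measurable.comp hDmeas.abs
    have hf2 : MemLp (fun ω => Real.sqrt |X ω - Y ω|) 2 P :=
      (memLp_two_iff_integrable_sq hsm.aestronglyMeasurable).mpr
        (hIabsD.congr (Filter.Eventually.of_forall fun ω => by
          beta_reduce
          rw [Real.sq_sqrt (abs_nonneg _)]))
    have hg2 : MemLp (fun ω => |X ω - Y ω| * Real.sqrt |X ω - Y ω|) 2 P :=
      (memLp_two_iff_integrable_sq (hDmeas.abs.mul hsm).aestronglyMeasurable).mpr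
        (hIabsD3.congr (Filter.Eventually.of_forall fun ω => by
          beta_reduce
          rw [Pi.mul_apply, mul_pow, Real.sq_sqrt (abs_nonneg _)]
          ring))
    have cs := aux_cs (fun ω => Real.sqrt_nonneg _)
      (fun ω => mul_nonneg (abs_nonneg _) (Real.sqrt_nonneg _)) hf2 hg2
    have eL : ∫ ω, Real.sqrt |X ω - Y ω| * (|X ω - Y ω| * Real.sqrt |X ω - Y ω|) ∂P
        = ∫ ω, (X ω - Y ω) ^ 2 ∂P := by
      refine integral_congr_ae (Filter.Eventually.of_forall fun ω => ?_)
      have h1 : Real.sqrt |X ω - Y ω| * Real.sqrt |X ω - Y ω| = |X ω - Y ω| :=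
        Real.mul_self_sqrt (abs_nonneg _)
      have h2 : |X ω - Y ω| * |X ω - Y ω| = (X ω - Y ω) * (X ω - Y ω) := abs_mul_abs_self _
      linear_combination |X ω - Y ω| * h1 + h2
    have ef : ∫ ω, Real.sqrt |X ω - Y ω| ^ 2 ∂P = ∫ ω, |X ω - Y ω| ∂P :=
      integral_congr_ae (Filter.Eventually.of_forall fun ω =>
        Real.sq_sqrt (abs_nonneg _))
    have eg : ∫ ω, (|X ω - Y ω| * Real.sqrt |X ω - Y ω|) ^ 2 ∂P
        = ∫ ω, |X ω - Y ω| ^ 3 ∂P :=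
      integral_congr_ae (Filter.Eventually.of_forall fun ω => by
        beta_reduce
        rw [mul_pow, Real.sq_sqrt (abs_nonneg _)]
        ring)
    rw [← hE2, ← eL, ← ef, ← eg]
    exact cs
  -- Cauchy-Schwarz II : E|D|^3 ≤ sqrt(E[D^2]) sqrt(E[D^4])
  have ineq2 : (∫ ω, |X ω - Y ω| ^ 3 ∂P) ≤
      Real.sqrt (2 * z2) * Real.sqrt (2 * z4 + 6 * z2 ^ 2) := by
    have hf2 : MemLp (fun ω => |X ω - Y ω|) 2 P :=
      (memLp_two_iff_integrable_sq hDmeas.abs.aestronglyMeasurable).mpr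
        (hID2.congr (Filter.Eventually.of_forall fun ω => by
          beta_reduce
          rw [sq_abs]))
    have hg2 : MemLp (fun ω => (X ω - Y ω) ^ 2) 2 P :=
      (memLp_two_iff_integrable_sq (hDmeas.pow_const 2).aestronglyMeasurable).mpr
        (hID4.congr (Filter.Eventually.of_forall fun ω => by beta_reduce; ring))
    have cs := aux_cs (fun ω => abs_nonneg _) (fun ω => sq_nonneg _) hf2 hg2
    have ef : ∫ ω, |X ω - Y ω| ^ 2 ∂P = 2 * z2 := by
      rw [← hE2]
      exact integral_congr_ae (Filter.Eventually.of_forall fun ω => sq_abs _)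
    have eg : ∫ ω, ((X ω - Y ω) ^ 2) ^ 2 ∂P = 2 * z4 + 6 * z2 ^ 2 := by
      rw [← hE4]
      exact integral_congr_ae (Filter.Eventually.of_forall fun ω => by beta_reduce; ring)
    calc ∫ ω, |X ω - Y ω| ^ 3 ∂P
        = ∫ ω, |X ω - Y ω| * (X ω - Y ω) ^ 2 ∂P := by
          refine integral_congr_ae (Filter.Eventually.of_forall fun ω => ?_)
          beta_reduce
          rw [← sq_abs]
          ring
      _ ≤ Real.sqrt (∫ ω, |X ω - Y ω| ^ 2 ∂P) * Real.sqrt (∫ ω, ((X ω - Y ω) ^ 2) ^ 2 ∂P) := cs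
      _ = Real.sqrt (2 * z2) * Real.sqrt (2 * z4 + 6 * z2 ^ 2) := by rw [ef, eg]
  exact aux_final _ _ _ _ ha1 hA3nn hz2pos hz4nn ineq1 ineq2
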